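/- Let (Rₙ) be a sequence of solid closed rectangles in ℝ² with sides parallel to the coordinate axes and positive area, all contained in a fixed open set U, such that every Rₙ contains a fixed point p and the diameters of the Rₙ tend to 0 as n → ∞. Let F = (M,N) be a C¹ vector field on U. Then the sequence (1/area(Rₙ)) · (counterclockwise circulation of F around ∂Rₙ) converges to scurl F(p) as n → ∞. -/

import Mathlib

open MeasureTheory Filter

/-- If `Rₙ = [aₙ,bₙ] × [cₙ,dₙ]` is a sequence of rectangles of positive area
contained in a fixed open set `U`, each containing a fixed point `p`, whose
diameters tend to `0`, and `F = (M, N)` is a C¹ vector field on `U`, then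
`(1/area Rₙ)` times the counterclockwise circulation of `F` around `∂Rₙ`
converges to `scurl F (p) = ∂N/∂x (p) − ∂M/∂y (p)`. -/
theorem circulation_tendsto_scurl
    (U : Set (ℝ × ℝ)) (hU : IsOpen U)
    (M N : ℝ × ℝ → ℝ)
    (hM : ContDiffOn ℝ 1 M U) (hN : ContDiffOn ℝ 1 N U)
    (p : ℝ × ℝ)
    (a b c d : ℕ → ℝ)
    (hab : ∀ n, a n < b n) (hcd : ∀ n, c n < d n)
    (hsub : ∀ n, Set.Icc (a n) (b n) ×ˢ Set.Icc (c n) (d n) ⊆ U)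
    (hp : ∀ n, p ∈ Set.Icc (a n) (b n) ×ˢ Set.Icc (c n) (d n))
    (hdiam : Tendsto
      (fun n => Metric.diam (Set.Icc (a n) (b n) ×ˢ Set.Icc (c n) (d n)))
      atTop (nhds 0)) :
    Tendsto
      (fun n => (1 / ((b n - a n) * (d n - c n))) *
          ((∫ t in (a n)..(b n), M (t, c n)) + (∫ t in (c n)..(d n), N (b n, t))
            - (∫ t in (a n)..(b n), M (t, d n))
            - (∫ t in (c n)..(d n), N (a n, t))))
      atTop (nhds (fderiv ℝ N p (1, 0) - fderiv ℝ M p (0, 1))) := by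
  set g : ℝ × ℝ → ℝ := fun x => fderiv ℝ N x (1, 0) - fderiv ℝ M x (0, 1) with hgdef
  set R : ℕ → Set (ℝ × ℝ) := fun n => Set.Icc (a n) (b n) ×ˢ Set.Icc (c n) (d n) with hRdef
  have hgc : ContinuousOn g U :=
    ((hN.continuousOn_fderiv_of_isOpen hU le_rfl).clm_apply continuousOn_const).sub
      ((hM.continuousOn_fderiv_of_isOpen hU le_rfl).clm_apply continuousOn_const)
  have hdM : ∀ x ∈ U, HasFDerivAt M (fderiv ℝ M x) x := fun x hx =>
    ((hM.contDiffAt (hU.mem_nhds hx)).differentiableAt one_ne_zero).hasFDerivAt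
  have hdN : ∀ x ∈ U, HasFDerivAt N (fderiv ℝ N x) x := fun x hx =>
    ((hN.contDiffAt (hU.mem_nhds hx)).differentiableAt one_ne_zero).hasFDerivAt
  have hgInt : ∀ n, IntegrableOn g (R n) := fun n =>
    (hgc.mono (hsub n)).integrableOn_compact (isCompact_Icc.prod isCompact_Icc)
  -- Green's theorem on each rectangle
  have green : ∀ n,
      (∫ t in (a n)..(b n), M (t, c n)) + (∫ t in (c n)..(d n), N (b n, t))
        - (∫ t in (a n)..(b n), M (t, d n)) - (∫ t in (c n)..(d n), N (a n, t))
      = ∫ x in R n, g x := by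
    intro n
    have hle : (a n, c n) ≤ (b n, d n) := ⟨(hab n).le, (hcd n).le⟩
    have hIcc : Set.Icc ((a n, c n) : ℝ × ℝ) (b n, d n) = R n := Set.Icc_prod_eq _ _
    have hsubU : Set.Icc ((a n, c n) : ℝ × ℝ) (b n, d n) ⊆ U := hIcc ▸ hsub n
    have key := integral_divergence_prod_Icc_of_hasFDerivAt_off_countable_of_le
      N (fun x => -M x) (fun x => fderiv ℝ N x) (fun x => -(fderiv ℝ M x))
      (a n, c n) (b n, d n) hle ∅ Set.countable_empty
      (hN.continuousOn.mono hsubU) ((hM.continuousOn.mono hsubU).neg)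
      (fun x hx => hdN x (hsubU (((Set.prod_mono Set.Ioo_subset_Icc_self Set.Ioo_subset_Icc_self).trans
        (by rw [← Set.Icc_prod_eq])) hx.1)))
      (fun x hx => (hdM x (hsubU (((Set.prod_mono Set.Ioo_subset_Icc_self Set.Ioo_subset_Icc_self).trans
        (by rw [← Set.Icc_prod_eq])) hx.1))).neg)
      (by
        rw [hIcc]
        exact (hgInt n).congr_fun (fun x _ => by simp [hgdef, sub_eq_add_neg])
          ((measurableSet_Icc.prod measurableSet_Icc)))
    rw [hIcc] at key
    have : (∫ x in R n, fderiv ℝ N x (1, 0) + (-(fderiv ℝ M x)) (0, 1)) = ∫ x in R n, g x := by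
      apply setIntegral_congr_fun (measurableSet_Icc.prod measurableSet_Icc)
      intro x _; simp [hgdef, sub_eq_add_neg]
    rw [this] at key
    rw [key]
    simp only [intervalIntegral.integral_neg]
    ring
  -- area of the rectangles
  have harea : ∀ n, (volume (R n)).toReal = (b n - a n) * (d n - c n) := by
    intro n
    rw [hRdef]
    rw [MeasureTheory.Measure.volume_eq_prod, MeasureTheory.Measure.prod_prod,
      Real.volume_Icc, Real.volume_Icc, ← ENNReal.ofReal_mul (by linarith [hab n])]
    exact ENNReal.toReal_ofReal (by nlinarith [hab n, hcd n])
  have hareapos : ∀ n, 0 < (b n - a n) * (d n - c n) := fun n => by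
    nlinarith [hab n, hcd n]
  have hvolfin : ∀ n, volume (R n) < ⊤ := fun n =>
    ((isCompact_Icc.prod isCompact_Icc).isBounded).measure_lt_top
  -- rewrite the function using Green
  have heq : ∀ n, (1 / ((b n - a n) * (d n - c n))) *
          ((∫ t in (a n)..(b n), M (t, c n)) + (∫ t in (c n)..(d n), N (b n, t))
            - (∫ t in (a n)..(b n), M (t, d n))
            - (∫ t in (c n)..(d n), N (a n, t)))
      = (1 / ((b n - a n) * (d n - c n))) * ∫ x in R n, g x := fun n => by rw [green n]
  simp only [heq]
  -- now prove the limit via ε-δ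
  have hpU : p ∈ U := hsub 0 (hp 0)
  rw [Metric.tendsto_atTop]
  intro ε hε
  have hcontp : ContinuousAt g p := hgc.continuousAt (hU.mem_nhds hpU)
  rcases Metric.continuousAt_iff.1 hcontp (ε / 2) (by linarith) with ⟨δ, hδ, hball⟩
  rcases (Metric.tendsto_atTop.1 hdiam (δ / 2) (by linarith)) with ⟨n₀, hn₀⟩
  refine ⟨n₀, fun n hn => ?_⟩
  have hdiamn : Metric.diam (R n) < δ := by
    have := hn₀ n hn
    rw [Real.dist_eq] at this
    have h2 := abs_lt.1 this
    linarith [h2.2]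
  have hbdd : Bornology.IsBounded (R n) := (isCompact_Icc.prod isCompact_Icc).isBounded
  have hclose : ∀ x ∈ R n, ‖g x - g p‖ ≤ ε / 2 := by
    intro x hx
    have hd : dist x p < δ := lt_of_le_of_lt (Metric.dist_le_diam_of_mem hbdd hx (hp n)) hdiamn
    have := hball hd
    rw [dist_eq_norm] at this
    exact this.le
  have hsplit : (∫ x in R n, g x) - ((b n - a n) * (d n - c n)) * g p
      = ∫ x in R n, (g x - g p) := by
    rw [integral_sub (hgInt n) (integrableOn_const (hvolfin n).ne)]
    rw [setIntegral_const, measureReal_def, harea n, smul_eq_mul]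
  have hnorm : ‖∫ x in R n, (g x - g p)‖ ≤ (ε / 2) * ((b n - a n) * (d n - c n)) := by
    have := norm_setIntegral_le_of_norm_le_const (μ := volume) (s := R n) (C := ε / 2)
      (hvolfin n) hclose
    · rwa [measureReal_def, harea n] at this
  rw [Real.dist_eq]
  have harea' := hareapos n
  have : (1 / ((b n - a n) * (d n - c n))) * (∫ x in R n, g x) - g p
      = (1 / ((b n - a n) * (d n - c n))) * (∫ x in R n, (g x - g p)) := by
    rw [← hsplit]; field_simp; rw [sub_div, mul_div_cancel_left₀ _ harea'.ne']
  rw [hgdef] at this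
  rw [this]
  rw [abs_mul, abs_of_pos (by positivity : (0:ℝ) < 1 / ((b n - a n) * (d n - c n)))]
  calc 1 / ((b n - a n) * (d n - c n)) * |∫ x in R n, (g x - g p)|
      ≤ 1 / ((b n - a n) * (d n - c n)) * ((ε / 2) * ((b n - a n) * (d n - c n))) := by
        apply mul_le_mul_of_nonneg_left _ (by positivity)
        simpa [Real.norm_eq_abs] using hnorm
    _ = ε / 2 := by field_simp; exact div_self harea'.ne'
    _ < ε := by linarith
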